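/- arXiv:2112.07377 — 2 statements merged into one kernel-verified Lean document; each statement's English description precedes it below -/
import Mathlib

section
/- The antecedent-introduction rules (from Γ,(φ₁,k₁),…,(φ_ℓ,k_ℓ) → Δ for all tuples (k₁,…,k_ℓ) with v_k ∈ ∗(v_{k₁},…,v_{k_ℓ}), infer Γ,(∗(φ₁,…,φ_ℓ),k) → Δ) are derivable in NMVL_R. -/
/-- Formulas over a set `C` of connectives (applied to lists of arguments). -/
inductive Fm (C : Type) : Type
  | atom : ℕ → Fm C
  | app : C → List (Fm C) → Fm C

noncomputable instance {C : Type} : DecidableEq (Fm C) := Classical.decEq _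

/-- A sequent of finite sets of labelled formulas. -/
structure Sequent (C : Type) [DecidableEq C] (n : ℕ) where
  ant : Finset (Fm C × Fin n)
  suc : Finset (Fm C × Fin n)

variable {C : Type} [DecidableEq C] {n : ℕ}

/-- A valuation legal w.r.t. the non-deterministic tables `tbl`. -/
def IsVal (tbl : C → List (Fin n) → Finset (Fin n)) (v : Fm C → Fin n) : Prop :=
  ∀ c args, v (Fm.app c args) ∈ tbl c (args.map v)

/-- A valuation satisfies a sequent. -/
def Sat (v : Fm C → Fin n) (S : Sequent C n) : Prop :=
  (∀ p ∈ S.ant, v p.1 = p.2) → ∃ p ∈ S.suc, v p.1 = p.2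

/-- Semantic entailment. -/
def Entails (tbl : C → List (Fin n) → Finset (Fin n)) (H : Set (Sequent C n)) (S : Sequent C n) : Prop :=
  ∀ v : Fm C → Fin n, IsVal tbl v → (∀ T ∈ H, Sat v T) → Sat v S

/-- The family (∗(φ₁,…,φ_ℓ)×k)⁻¹ of antecedent sets. -/
def Theta (tbl : C → List (Fin n) → Finset (Fin n)) (c : C) (args : List (Fm C)) (k : Fin n) :
    Set (Finset (Fm C × Fin n)) :=
  { Θ | ∃ ks : List (Fin n), ks.length = args.length ∧ k ∈ tbl c ks ∧ Θ = (args.zip ks).toFinset }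

/-- Λ ∈ ⋁(∗(φ₁,…,φ_ℓ)×k)⁻¹ : a choice set hitting each Θ_q and contained in their union. -/
def Choice (tbl : C → List (Fin n) → Finset (Fin n)) (c : C) (args : List (Fm C)) (k : Fin n)
    (Λ : Finset (Fm C × Fin n)) : Prop :=
  (∀ Θ ∈ Theta tbl c args k, ∃ x ∈ Θ, x ∈ Λ) ∧
  (∀ x ∈ Λ, ∃ Θ ∈ Theta tbl c args k, x ∈ Θ)

/-- Which optional axioms/rules a calculus has. -/
structure Rules where
  tableAx : Bool      -- table axioms (2)
  tableRuleS : Bool   -- succedent table rules (10)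
  dualAx : Bool       -- distributively dual axioms (13)
  anteRule : Bool     -- antecedent introduction rules (17)
  multiShift : Bool   -- K-L-multi-shift (16)
  cut : Bool
  res : Bool

/-- Derivability from hypothesis sequents `H`; axioms (ψ,k)→(ψ,k), L-shift, R-shift and
weakenings are always present, the other axioms/rules are governed by `R`. -/
inductive Deriv (R : Rules) (tbl : C → List (Fin n) → Finset (Fin n)) (H : Set (Sequent C n)) :
    Sequent C n → Prop
  | hyp {S} : S ∈ H → Deriv R tbl H S
  | ax (ψ : Fm C) (k : Fin n) : Deriv R tbl H ⟨{(ψ, k)}, {(ψ, k)}⟩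
  | tableAx (c : C) (args : List (Fm C)) (ks : List (Fin n))
      (hlen : ks.length = args.length) (h : R.tableAx = true) :
      Deriv R tbl H ⟨(args.zip ks).toFinset, (tbl c ks).image (fun k => (Fm.app c args, k))⟩
  | lshift {Γ Δ} (φ : Fm C) (k : Fin n) :
      Deriv R tbl H ⟨insert (φ, k) Γ, Δ⟩ →
      Deriv R tbl H ⟨Γ, Δ ∪ ({k}ᶜ : Finset (Fin n)).image (fun k' => (φ, k'))⟩
  | rshift {Γ Δ} (φ : Fm C) {k' k'' : Fin n} (h : k' ≠ k'') :
      Deriv R tbl H ⟨Γ, insert (φ, k') Δ⟩ → Deriv R tbl H ⟨insert (φ, k'') Γ, Δ⟩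
  | lweak {Γ Δ} (φ : Fm C) (k : Fin n) :
      Deriv R tbl H ⟨Γ, Δ⟩ → Deriv R tbl H ⟨insert (φ, k) Γ, Δ⟩
  | rweak {Γ Δ} (φ : Fm C) (k : Fin n) :
      Deriv R tbl H ⟨Γ, Δ⟩ → Deriv R tbl H ⟨Γ, insert (φ, k) Δ⟩
  | cut {Γ Δ} (φ : Fm C) (k : Fin n) (h : R.cut = true) :
      Deriv R tbl H ⟨Γ, insert (φ, k) Δ⟩ → Deriv R tbl H ⟨insert (φ, k) Γ, Δ⟩ →
      Deriv R tbl H ⟨Γ, Δ⟩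
  | res {Γ Δ' Δ''} (φ : Fm C) {k' k'' : Fin n} (h : R.res = true) (hk : k' ≠ k'') :
      Deriv R tbl H ⟨Γ, insert (φ, k') Δ'⟩ → Deriv R tbl H ⟨Γ, insert (φ, k'') Δ''⟩ →
      Deriv R tbl H ⟨Γ, Δ' ∪ Δ''⟩
  | tableRuleS {Γ Δ} (c : C) (args : List (Fm C)) (ks : List (Fin n))
      (hlen : ks.length = args.length) (h : R.tableRuleS = true)
      (prem : ∀ p ∈ args.zip ks, Deriv R tbl H ⟨Γ, insert p Δ⟩) :
      Deriv R tbl H ⟨Γ, Δ ∪ (tbl c ks).image (fun k => (Fm.app c args, k))⟩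
  | dualAx (c : C) (args : List (Fm C)) (k : Fin n) (Λ : Finset (Fm C × Fin n))
      (h : R.dualAx = true) (hΛ : Choice tbl c args k Λ) :
      Deriv R tbl H ⟨{(Fm.app c args, k)}, Λ⟩
  | anteRule {Γ Δ} (c : C) (args : List (Fm C)) (k : Fin n) (h : R.anteRule = true)
      (prem : ∀ ks : List (Fin n), ks.length = args.length → k ∈ tbl c ks →
        Deriv R tbl H ⟨Γ ∪ (args.zip ks).toFinset, Δ⟩) :
      Deriv R tbl H ⟨insert (Fm.app c args, k) Γ, Δ⟩
  | multiShift {Γ Δ} (φ : Fm C) (K : Finset (Fin n)) (h : R.multiShift = true)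
      (hK : K ≠ Finset.univ)
      (prem : ∀ k ∈ K, Deriv R tbl H ⟨insert (φ, k) Γ, Δ⟩) :
      Deriv R tbl H ⟨Γ, Δ ∪ Kᶜ.image (fun k' => (φ, k'))⟩

/-- NMVL_A : table axioms, cut and resolution. -/
def NMVL_A : Rules := ⟨true, false, false, false, false, true, true⟩
/-- NMVL_A with cut but without resolution. -/
def NMVL_A_cut : Rules := ⟨true, false, false, false, false, true, false⟩
/-- NMVL_A with resolution but without cut. -/
def NMVL_A_res : Rules := ⟨true, false, false, false, false, false, true⟩
/-- NMVL_R : succedent table rules, cut and resolution. -/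
def NMVL_R : Rules := ⟨false, true, false, false, false, true, true⟩
/-- NMVL_R without cut and resolution. -/
def NMVL_R_cf : Rules := ⟨false, true, false, false, false, false, false⟩
/-- NMVL_A^dd : distributively dual axioms, cut and resolution. -/
def NMVL_Add : Rules := ⟨false, false, true, false, false, true, true⟩
/-- NMVL_R^sd : antecedent table rules, multi-shift, cut and resolution. -/
def NMVL_Rsd : Rules := ⟨false, false, false, true, true, true, true⟩

section Aux
variable {R : Rules} {tbl : C → List (Fin n) → Finset (Fin n)} {H : Set (Sequent C n)}

lemma weakL {Γ Δ : Finset (Fm C × Fin n)} (E : Finset (Fm C × Fin n))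
    (h : Deriv R tbl H ⟨Γ, Δ⟩) : Deriv R tbl H ⟨Γ ∪ E, Δ⟩ := by
  induction E using Finset.induction_on with
  | empty => simpa using h
  | @insert a s ha ih =>
      rw [Finset.union_insert]
      exact Deriv.lweak a.1 a.2 ih

lemma weakR {Γ Δ : Finset (Fm C × Fin n)} (E : Finset (Fm C × Fin n))
    (h : Deriv R tbl H ⟨Γ, Δ⟩) : Deriv R tbl H ⟨Γ, Δ ∪ E⟩ := by
  induction E using Finset.induction_on with
  | empty => simpa using h
  | @insert a s ha ih =>
      rw [Finset.union_insert]
      exact Deriv.rweak a.1 a.2 ih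

lemma weaken {Γ Δ Γ' Δ' : Finset (Fm C × Fin n)} (hΓ : Γ ⊆ Γ') (hΔ : Δ ⊆ Δ')
    (h : Deriv R tbl H ⟨Γ, Δ⟩) : Deriv R tbl H ⟨Γ', Δ'⟩ := by
  have h1 := weakR Δ' (weakL Γ' h)
  rwa [Finset.union_eq_right.mpr hΓ, Finset.union_eq_right.mpr hΔ] at h1

lemma axMem {Γ Δ : Finset (Fm C × Fin n)} {p : Fm C × Fin n} (hp : p ∈ Γ) (hq : p ∈ Δ) :
    Deriv R tbl H ⟨Γ, Δ⟩ := by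
  have := Deriv.ax (R := R) (tbl := tbl) (H := H) p.1 p.2
  exact weaken (by simpa using hp) (by simpa using hq) this

lemma rshift_many (φ : Fm C) (k : Fin n) (S : Finset (Fin n)) (hS : k ∉ S) :
    ∀ Γ Δ : Finset (Fm C × Fin n), Deriv R tbl H ⟨Γ, Δ ∪ S.image (fun k' => (φ, k'))⟩ →
      Deriv R tbl H ⟨insert (φ, k) Γ, Δ⟩ := by
  induction S using Finset.induction_on with
  | empty => intro Γ Δ h; exact Deriv.lweak φ k (by simpa using h)
  | @insert a s ha ih =>
      intro Γ Δ h
      rw [Finset.image_insert, Finset.union_insert] at h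
      have hk : a ≠ k := fun e => hS (e ▸ Finset.mem_insert_self a s)
      have h2 := Deriv.rshift φ hk h
      have h3 := ih (fun e => hS (Finset.mem_insert_of_mem e)) _ _ h2
      simpa using h3

lemma elim_many (hcut : R.cut = true) (φ : Fm C) (Γ Δ : Finset (Fm C × Fin n))
    (S : Finset (Fin n))
    (h : Deriv R tbl H ⟨Γ, Δ ∪ S.image (fun k' => (φ, k'))⟩)
    (hj : ∀ j ∈ S, Deriv R tbl H ⟨insert (φ, j) Γ, Δ⟩) :
    Deriv R tbl H ⟨Γ, Δ⟩ := by
  induction S using Finset.induction_on with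
  | empty => simpa using h
  | @insert a s ha ih =>
      rw [Finset.image_insert, Finset.union_insert] at h
      have h2 : Deriv R tbl H ⟨insert (φ, a) Γ, Δ ∪ s.image (fun k' => (φ, k'))⟩ :=
        weakR _ (hj a (Finset.mem_insert_self a s))
      have h3 := Deriv.cut φ a hcut h h2
      exact ih h3 (fun j hjs => hj j (Finset.mem_insert_of_mem hjs))

lemma elim_one (hn : 0 < n) (hcut : R.cut = true) (φ : Fm C)
    {Γ Δ : Finset (Fm C × Fin n)}
    (h : ∀ j : Fin n, Deriv R tbl H ⟨insert (φ, j) Γ, Δ⟩) :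
    Deriv R tbl H ⟨Γ, Δ⟩ := by
  have j0 : Fin n := ⟨0, hn⟩
  have h1 := Deriv.lshift φ j0 (h j0)
  exact elim_many hcut φ Γ Δ ({j0}ᶜ) h1 (fun j _ => h j)

lemma elim_list (hn : 0 < n) (hcut : R.cut = true) (fs : List (Fm C)) :
    ∀ Γ Δ : Finset (Fm C × Fin n),
      (∀ ks : List (Fin n), ks.length = fs.length →
        Deriv R tbl H ⟨Γ ∪ (fs.zip ks).toFinset, Δ⟩) →
      Deriv R tbl H ⟨Γ, Δ⟩ := by
  induction fs with
  | nil => intro Γ Δ h; simpa using h [] rfl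
  | cons f fs ih =>
      intro Γ Δ h
      apply elim_one hn hcut f
      intro j
      apply ih
      intro ks hks
      have h2 := h (j :: ks) (by simpa using hks)
      rw [List.zip_cons_cons, List.toFinset_cons, Finset.union_insert,
        ← Finset.insert_union] at h2
      exact h2

end Aux

/-- the antecedent-introduction rules are derivable in NMVL_R. -/
theorem stmt14 (hn : 2 ≤ n) (tbl : C → List (Fin n) → Finset (Fin n))
    (htbl : ∀ c ks, (tbl c ks).Nonempty) (H : Set (Sequent C n))
    (Γ Δ : Finset (Fm C × Fin n)) (c : C) (args : List (Fm C)) (k : Fin n)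
    (prem : ∀ ks : List (Fin n), ks.length = args.length → k ∈ tbl c ks →
      Deriv NMVL_R tbl H ⟨Γ ∪ (args.zip ks).toFinset, Δ⟩) :
    Deriv NMVL_R tbl H ⟨insert (Fm.app c args, k) Γ, Δ⟩ := by
  have hcut : NMVL_R.cut = true := rfl
  have hn0 : 0 < n := by omega
  -- For every ks, derive insert (app,k) Γ ∪ zip → Δ
  have key : ∀ ks : List (Fin n), ks.length = args.length →
      Deriv NMVL_R tbl H ⟨insert (Fm.app c args, k) Γ ∪ (args.zip ks).toFinset, Δ⟩ := by
    intro ks hks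
    by_cases hk : k ∈ tbl c ks
    · have := Deriv.lweak (Fm.app c args) k (prem ks hks hk)
      rwa [Finset.insert_union]
    · have hax : ∀ p ∈ args.zip ks,
          Deriv NMVL_R tbl H ⟨Γ ∪ (args.zip ks).toFinset, insert p Δ⟩ := by
        intro p hp
        exact axMem (Finset.mem_union_right _ (List.mem_toFinset.mpr hp))
          (Finset.mem_insert_self _ _)
      have h1 := Deriv.tableRuleS (Γ := Γ ∪ (args.zip ks).toFinset) (Δ := Δ)
        c args ks hks rfl hax
      have h2 := rshift_many (Fm.app c args) k (tbl c ks) hk _ _ h1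
      rwa [Finset.insert_union]
  exact elim_list hn0 hcut args (insert (Fm.app c args, k) Γ) Δ key
end

section
/- In any system containing axioms (ψ,k)→(ψ,k), R-weakening, and the k′,k″-resolution rule, if Γ → Δ, {(φ,k) : k ∈ K} is derivable and k₀ ∉ K, then together with the axiom (φ,k₀)→(φ,k₀) one can derive Γ, (φ,k₀) → Δ by |K| resolutions; in particular, from a table axiom weakened with Δ and the assumption v_{k₀} ∉ ∗(v_{k₁},…,v_{k_ℓ}), the sequent (φ* , k₀), (φ₁,k₁),…,(φ_ℓ,k_ℓ) → Δ is derivable, where φ* = ∗(φ₁,…,φ_ℓ). -/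
variable {C : Type} [DecidableEq C] {n : ℕ}

/-- derivations by repeated resolutions against the axiom (φ,k₀)→(φ,k₀),
and the particular instance starting from a weakened table axiom. -/
theorem stmt18 (hn : 2 ≤ n) (tbl : C → List (Fin n) → Finset (Fin n))
    (htbl : ∀ c ks, (tbl c ks).Nonempty) (H : Set (Sequent C n)) :
    (∀ (R : Rules), R.res = true →
      ∀ (Γ Δ : Finset (Fm C × Fin n)) (φ : Fm C) (K : Finset (Fin n)) (k₀ : Fin n),
        k₀ ∉ K → Deriv R tbl H ⟨Γ, Δ ∪ K.image (fun k => (φ, k))⟩ →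
        Deriv R tbl H ⟨insert (φ, k₀) Γ, Δ⟩) ∧
    (∀ (R : Rules), R.res = true → R.tableAx = true →
      ∀ (Δ : Finset (Fm C × Fin n)) (c : C) (args : List (Fm C)) (ks : List (Fin n))
        (k₀ : Fin n), ks.length = args.length → k₀ ∉ tbl c ks →
        Deriv R tbl H ⟨insert (Fm.app c args, k₀) (args.zip ks).toFinset, Δ⟩) := by
  have lweaks : ∀ (R : Rules) (Γ Γ₀ Δ : Finset (Fm C × Fin n)),
      Deriv R tbl H ⟨Γ₀, Δ⟩ → Deriv R tbl H ⟨Γ ∪ Γ₀, Δ⟩ := by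
    intro R Γ Γ₀ Δ h
    induction Γ using Finset.induction with
    | empty => simpa using h
    | insert _ _ hx ih =>
      rw [Finset.insert_union]
      exact Deriv.lweak _ _ ih
  have main : ∀ (R : Rules), R.res = true →
      ∀ (Γ Δ : Finset (Fm C × Fin n)) (φ : Fm C) (K : Finset (Fin n)) (k₀ : Fin n),
        k₀ ∉ K → Deriv R tbl H ⟨Γ, Δ ∪ K.image (fun k => (φ, k))⟩ →
        Deriv R tbl H ⟨insert (φ, k₀) Γ, Δ⟩ := by
    intro R hres Γ Δ φ K
    induction K using Finset.induction generalizing Γ with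
    | empty =>
      intro k₀ _ h
      simp only [Finset.image_empty, Finset.union_empty] at h
      exact Deriv.lweak _ _ h
    | @insert k K' hk ih =>
      intro k₀ hk₀ h
      have hkk₀ : k ≠ k₀ := by rintro rfl; exact hk₀ (Finset.mem_insert_self _ _)
      have hk₀' : k₀ ∉ K' := fun hm => hk₀ (Finset.mem_insert_of_mem hm)
      have h1 : Deriv R tbl H ⟨insert (φ, k₀) Γ, insert (φ, k) (Δ ∪ K'.image (fun k => (φ, k)))⟩ := by
        have := Deriv.lweak (R := R) (tbl := tbl) (H := H) φ k₀ h
        simpa [Finset.image_insert, Finset.union_insert] using this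
      have h2 : Deriv R tbl H ⟨insert (φ, k₀) Γ, insert (φ, k₀) (∅ : Finset (Fm C × Fin n))⟩ := by
        have := lweaks R Γ {(φ, k₀)} {(φ, k₀)} (Deriv.ax φ k₀)
        rw [Finset.union_comm, ← Finset.insert_eq] at this
        simpa using this
      have h3 := Deriv.res φ hres hkk₀ h1 h2
      simp only [Finset.union_empty] at h3
      have h4 := ih (insert (φ, k₀) Γ) k₀ hk₀' h3
      simpa using h4
  refine ⟨main, ?_⟩
  intro R hres htab Δ c args ks k₀ hlen hk₀
  have hax := Deriv.tableAx (R := R) (tbl := tbl) (H := H) c args ks hlen htab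
  have hw : Deriv R tbl H ⟨(args.zip ks).toFinset,
      Δ ∪ (tbl c ks).image (fun k => (Fm.app c args, k))⟩ := by
    induction Δ using Finset.induction with
    | empty => simpa using hax
    | insert _ _ hx ih =>
      rw [Finset.insert_union]
      exact Deriv.rweak _ _ ih
  exact main R hres _ Δ _ _ k₀ hk₀ hw
end
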